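/- Let k ≥ 2 be an integer, let p₁, p_k be real numbers with 0 < p₁ < p_k < k·p₁, let A, L, L_c be real numbers, and let U : ℝ → ℝ be differentiable with U'(x) > 0 for all x and with U' strictly antitone on ℝ. Define H^k(t) = p₁·U(A − p_k·L_c − L − (k−1)·t + L_c) + (p_k − p₁)·U(A − p_k·L_c − L + t + L_c) + (1 − p_k)·U(A − p_k·L_c). Then for every t ≥ 0, the derivative of H^k at t is strictly negative. -/

import Mathlib

/-- Scenario B (Proposition 3, key computation): the derivative of a participating
provider's expected utility `Hᵏ` with respect to the fine `t` is strictly negative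
for every `t ≥ 0`. -/
theorem scenarioB_fine_derivative_neg
    (k : ℕ) (hk : 2 ≤ k) (p₁ pk A L Lc : ℝ)
    (hp₁ : 0 < p₁) (hp₁k : p₁ < pk) (hpk : pk < (k : ℝ) * p₁)
    (U : ℝ → ℝ) (hUdiff : Differentiable ℝ U)
    (hU' : ∀ x : ℝ, 0 < deriv U x) (hU'anti : StrictAnti (deriv U)) :
    ∀ t : ℝ, 0 ≤ t →
      deriv (fun t : ℝ =>
        p₁ * U (A - pk * Lc - L - ((k : ℝ) - 1) * t + Lc) +
        (pk - p₁) * U (A - pk * Lc - L + t + Lc) +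
        (1 - pk) * U (A - pk * Lc)) t < 0 := by
  intro t ht
  have hk2 : (2 : ℝ) ≤ (k : ℝ) := by exact_mod_cast hk
  set x₁ : ℝ := A - pk * Lc - L - ((k : ℝ) - 1) * t + Lc with hx₁
  set x₂ : ℝ := A - pk * Lc - L + t + Lc with hx₂
  have h1 : HasDerivAt (fun t : ℝ => A - pk * Lc - L - ((k : ℝ) - 1) * t + Lc)
      (-((k : ℝ) - 1)) t := by
    exact
      ((((hasDerivAt_const t (A - pk * Lc - L)).sub
        ((hasDerivAt_id t).const_mul ((k : ℝ) - 1))).add (hasDerivAt_const t Lc)).congr_deriv (by ring))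
  have h2 : HasDerivAt (fun t : ℝ => A - pk * Lc - L + t + Lc) 1 t := by
    exact
      ((((hasDerivAt_const t (A - pk * Lc - L)).add (hasDerivAt_id t)).add
        (hasDerivAt_const t Lc)).congr_deriv (by ring))
  have hU1 : HasDerivAt (fun t : ℝ => U (A - pk * Lc - L - ((k : ℝ) - 1) * t + Lc))
      (deriv U x₁ * (-((k : ℝ) - 1))) t := (hUdiff x₁).hasDerivAt.comp t h1
  have hU2 : HasDerivAt (fun t : ℝ => U (A - pk * Lc - L + t + Lc))
      (deriv U x₂ * 1) t := (hUdiff x₂).hasDerivAt.comp t h2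
  have hH : HasDerivAt (fun t : ℝ =>
      p₁ * U (A - pk * Lc - L - ((k : ℝ) - 1) * t + Lc) +
      (pk - p₁) * U (A - pk * Lc - L + t + Lc) +
      (1 - pk) * U (A - pk * Lc))
      (p₁ * (deriv U x₁ * (-((k : ℝ) - 1))) + (pk - p₁) * (deriv U x₂ * 1) + 0) t :=
    ((hU1.const_mul p₁).add (hU2.const_mul (pk - p₁))).add
      (hasDerivAt_const t ((1 - pk) * U (A - pk * Lc)))
  rw [hH.deriv]
  have hle : deriv U x₂ ≤ deriv U x₁ :=
    hU'anti.antitone (by simp only [hx₁, hx₂]; nlinarith)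
  have ha := hU' x₁
  have hb := hU' x₂
  nlinarith [mul_lt_mul_of_pos_right (show pk - p₁ < ((k:ℝ) - 1) * p₁ by nlinarith) ha,
    mul_le_mul_of_nonneg_left hle (le_of_lt (by nlinarith : (0:ℝ) < pk - p₁))]
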